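/- Let d ≥ 3, let ρ ∈ (0,1/4), and let Λ ⊆ S^{d−1} ∩ Q^d be a finite set of rational unit vectors. Then there exist μ_0 = μ_0(d, Λ) > 0 and a family of vectors {v_ξ}_{ξ∈Λ} ⊆ R^d such that the periodized cylinders v_ξ + B_{2ρ μ^{−1}} + R ξ + Z^d are pairwise disjoint as ξ varies in Λ, provided μ ≥ μ_0. -/

import Mathlib

open MeasureTheory Set
open scoped ENNReal NNReal RealInnerProductSpace BigOperators
open scoped Pointwise

noncomputable section

abbrev Rd (d : ℕ) := EuclideanSpace ℝ (Fin d)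
/-- The integer vector `k` viewed as a point of `ℝ^d`. -/
def intVec {d : ℕ} (k : Fin d → ℤ) : Rd d := WithLp.toLp 2 (fun i => (k i : ℝ))

/-- `ξ` has rational coordinates. -/
def RationalVector {d : ℕ} (ξ : Rd d) : Prop := ∀ i, ∃ q : ℚ, ξ i = (q : ℝ)

/-- The ℤ^d-periodization of the open cylinder of radius `r` around the line through `v`
with direction `ξ`, i.e. the set `v + B_r + ℝ ξ + ℤ^d`. -/
def perCyl {d : ℕ} (v ξ : Rd d) (r : ℝ) : Set (Rd d) :=
  {x | ∃ (t : ℝ) (k : Fin d → ℤ), dist x (v + t • ξ + intVec k) < r}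

/-! ### Auxiliary material -/

lemma intVec_add {d : ℕ} (k k' : Fin d → ℤ) : intVec (k + k') = intVec k + intVec k' := by
  ext i; simp [intVec]

lemma intVec_sub {d : ℕ} (k k' : Fin d → ℤ) : intVec (k - k') = intVec k - intVec k' := by
  ext i; simp [intVec]

lemma intVec_zsmul {d : ℕ} (m : ℤ) (k : Fin d → ℤ) : intVec (m • k) = (m : ℝ) • intVec k := by
  ext i; simp [intVec]

lemma one_le_dist_intVec {d : ℕ} {k k' : Fin d → ℤ} (h : k ≠ k') :
    1 ≤ dist (intVec k) (intVec k') := by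
  obtain ⟨i, hi⟩ := Function.ne_iff.mp h
  rw [EuclideanSpace.dist_eq]
  rw [show (1:ℝ) = Real.sqrt 1 by simp]
  apply Real.sqrt_le_sqrt
  have h1 : (1:ℝ) ≤ dist (intVec k i) (intVec k' i) ^ 2 := by
    have : (1:ℝ) ≤ |(k i : ℝ) - (k' i : ℝ)| := by
      have : (1:ℤ) ≤ |k i - k' i| := Int.one_le_abs (sub_ne_zero.mpr hi)
      calc (1:ℝ) = ((1:ℤ):ℝ) := by norm_num
        _ ≤ ((|k i - k' i| : ℤ) : ℝ) := by exact_mod_cast this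
        _ = |(k i : ℝ) - (k' i : ℝ)| := by push_cast; ring_nf
    have h2 : dist (intVec k i) (intVec k' i) = |(k i : ℝ) - (k' i : ℝ)| := by
      simp [intVec, Real.dist_eq]
    rw [h2]
    nlinarith [abs_nonneg ((k i : ℝ) - (k' i : ℝ))]
  calc (1:ℝ) ≤ dist (intVec k i) (intVec k' i) ^ 2 := h1
    _ ≤ ∑ j, dist (intVec k j) (intVec k' j) ^ 2 :=
        Finset.single_le_sum (f := fun j => dist (intVec k j) (intVec k' j) ^ 2)
          (fun j _ => sq_nonneg _) (Finset.mem_univ i)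

lemma isClosed_range_intVec {d : ℕ} : IsClosed (Set.range (intVec (d := d))) := by
  apply isClosed_of_closure_subset
  intro x hx
  obtain ⟨y₁, hy₁, hd₁⟩ := Metric.mem_closure_iff.mp hx (1/2) (by norm_num)
  by_contra hxr
  have hne : x ≠ y₁ := fun h => hxr (h ▸ hy₁)
  have hpos : 0 < dist x y₁ := dist_pos.mpr hne
  obtain ⟨y₂, hy₂, hd₂⟩ := Metric.mem_closure_iff.mp hx (min (dist x y₁) (1/2))
    (lt_min hpos (by norm_num))
  obtain ⟨k₁, rfl⟩ := hy₁
  obtain ⟨k₂, rfl⟩ := hy₂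
  have : k₂ = k₁ := by
    by_contra hkk
    have := one_le_dist_intVec hkk
    have : dist (intVec k₂) (intVec k₁) ≤ dist x (intVec k₂) + dist x (intVec k₁) := by
      rw [dist_comm x (intVec k₂)]; exact dist_triangle _ _ _
    have h2 : dist x (intVec k₂) < 1/2 := lt_of_lt_of_le hd₂ (min_le_right _ _)
    linarith
  rw [this] at hd₂
  exact absurd hd₂ (not_lt.mpr (min_le_left _ _))

lemma exists_period {d : ℕ} {ξ : Rd d} (hξ : RationalVector ξ) :
    ∃ N : ℕ, 0 < N ∧ ∃ k : Fin d → ℤ, (N : ℝ) • ξ = intVec k := by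
  choose q hq using hξ
  refine ⟨∏ i, (q i).den, Finset.prod_pos fun i _ => (q i).pos,
    fun i => (q i).num * (((∏ j, (q j).den) / (q i).den : ℕ) : ℤ), ?_⟩
  ext i
  have hdvd : (q i).den ∣ ∏ j, (q j).den := Finset.dvd_prod_of_mem _ (Finset.mem_univ i)
  have hden : (((∏ j, (q j).den) / (q i).den : ℕ) : ℝ) * ((q i).den : ℝ) =
      ((∏ j, (q j).den : ℕ) : ℝ) := by
    rw [← Nat.cast_mul, Nat.div_mul_cancel hdvd]
  have hsmul : (((∏ j, (q j).den : ℕ) : ℝ) • ξ) i = ((∏ j, (q j).den : ℕ) : ℝ) * ξ i := rfl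
  rw [hsmul, hq i, intVec]
  have hq' : ((q i : ℝ)) * ((q i).den : ℝ) = ((q i).num : ℝ) := by
    exact_mod_cast Rat.mul_den_eq_num (q i)
  have hgoal : ((∏ j, (q j).den : ℕ) : ℝ) * (q i : ℝ) =
      (((q i).num * (((∏ j, (q j).den) / (q i).den : ℕ) : ℤ) : ℤ) : ℝ) := by
    rw [Int.cast_mul, Int.cast_natCast]
    linear_combination (-(q i : ℝ)) * hden + ((((∏ j, (q j).den) / (q i).den : ℕ) : ℝ)) * hq'
  exact hgoal

/-- The set `ℝ ξ + ℝ ξ' + ℤ^d`. -/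
def pairSet {d : ℕ} (ξ ξ' : Rd d) : Set (Rd d) :=
  {x | ∃ t s : ℝ, ∃ k : Fin d → ℤ, x = t • ξ + s • ξ' + intVec k}

lemma pairSet_nonempty {d : ℕ} (ξ ξ' : Rd d) : (pairSet ξ ξ').Nonempty :=
  ⟨intVec 0, 0, 0, 0, by simp⟩

lemma pairSet_symm {d : ℕ} (ξ ξ' : Rd d) : pairSet ξ ξ' = pairSet ξ' ξ := by
  ext x
  constructor <;> rintro ⟨t, s, k, rfl⟩ <;> exact ⟨s, t, k, by abel_nf⟩

lemma pairSet_neg {d : ℕ} {ξ ξ' : Rd d} {x : Rd d} (hx : x ∈ pairSet ξ ξ') :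
    -x ∈ pairSet ξ ξ' := by
  obtain ⟨t, s, k, rfl⟩ := hx
  refine ⟨-t, -s, -k, ?_⟩
  have : intVec (-k) = -intVec (d := d) k := by ext i; simp [intVec]
  rw [this]
  module

lemma volume_pairSet {d : ℕ} (hd : 3 ≤ d) (ξ ξ' : Rd d) : volume (pairSet ξ ξ') = 0 := by
  have hsub : pairSet ξ ξ' ⊆
      ⋃ k : Fin d → ℤ, (AffineSubspace.mk' (intVec k) (Submodule.span ℝ {ξ, ξ'}) : Set (Rd d)) := by
    rintro x ⟨t, s, k, rfl⟩
    refine mem_iUnion.mpr ⟨k, ?_⟩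
    rw [AffineSubspace.mem_coe, AffineSubspace.mem_mk']
    have : t • ξ + s • ξ' + intVec k -ᵥ intVec k = t • ξ + s • ξ' := by
      simp [vsub_eq_sub]
    rw [this]
    exact Submodule.add_mem _
      (Submodule.smul_mem _ _ (Submodule.subset_span (by simp)))
      (Submodule.smul_mem _ _ (Submodule.subset_span (by simp)))
  refine measure_mono_null hsub (measure_iUnion_null fun k => ?_)
  apply Measure.addHaar_affineSubspace
  intro htop
  have h1 : (AffineSubspace.mk' (intVec k)
      (Submodule.span ℝ ({ξ, ξ'} : Set (Rd d)))).direction = ⊤ := by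
    rw [htop]; exact AffineSubspace.direction_top ℝ _ _
  rw [AffineSubspace.direction_mk'] at h1
  have h2 : Submodule.span ℝ ({ξ, ξ'} : Set (Rd d)) < ⊤ := by
    classical
    haveI : Fintype ({ξ, ξ'} : Set (Rd d)) := Set.fintypeInsert ξ {ξ'}
    apply span_lt_top_of_card_lt_finrank
    calc ({ξ, ξ'} : Set (Rd d)).toFinset.card ≤ 2 := by
          rw [Set.toFinset_insert, Set.toFinset_singleton]
          exact (Finset.card_insert_le _ _).trans (by simp)
      _ < Module.finrank ℝ (Rd d) := by
          rw [finrank_euclideanSpace_fin]; omega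
  exact absurd h1 h2.ne

lemma isClosed_pairSet {d : ℕ} {ξ ξ' : Rd d} (hξ : RationalVector ξ) (hξ' : RationalVector ξ') :
    IsClosed (pairSet ξ ξ') := by
  obtain ⟨N, hN, kN, hkN⟩ := exists_period hξ
  obtain ⟨N', hN', kN', hkN'⟩ := exists_period hξ'
  have hN0 : (0:ℝ) < N := by exact_mod_cast hN
  have hN'0 : (0:ℝ) < N' := by exact_mod_cast hN'
  have key : pairSet ξ ξ' =
      ((fun p : ℝ × ℝ => p.1 • ξ + p.2 • ξ') '' (Icc 0 (N:ℝ) ×ˢ Icc 0 (N':ℝ))) +ᵥ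
        Set.range (intVec (d := d)) := by
    ext x
    constructor
    · rintro ⟨t, s, k, rfl⟩
      set m := ⌊t / (N:ℝ)⌋ with hm
      set m' := ⌊s / (N':ℝ)⌋ with hm'
      have ht1 := Int.floor_le (t / (N:ℝ))
      have ht2 := Int.lt_floor_add_one (t / (N:ℝ))
      have hs1 := Int.floor_le (s / (N':ℝ))
      have hs2 := Int.lt_floor_add_one (s / (N':ℝ))
      have hb1 : (0:ℝ) ≤ t - (m:ℝ) * N := by
        rw [sub_nonneg]
        calc (m:ℝ) * N ≤ (t / N) * N := by nlinarith
          _ = t := by field_simp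
      have hb2 : t - (m:ℝ) * N ≤ N := by
        have : t < ((m:ℝ) + 1) * N := by
          calc t = (t / N) * N := by field_simp
            _ < ((m:ℝ) + 1) * N := by nlinarith
        nlinarith
      have hb3 : (0:ℝ) ≤ s - (m':ℝ) * N' := by
        rw [sub_nonneg]
        calc (m':ℝ) * N' ≤ (s / N') * N' := by nlinarith
          _ = s := by field_simp
      have hb4 : s - (m':ℝ) * N' ≤ N' := by
        have : s < ((m':ℝ) + 1) * N' := by
          calc s = (s / N') * N' := by field_simp
            _ < ((m':ℝ) + 1) * N' := by nlinarith
        nlinarith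
      refine ⟨(t - (m:ℝ) * N) • ξ + (s - (m':ℝ) * N') • ξ', ⟨(t - (m:ℝ) * N, s - (m':ℝ) * N'),
        ⟨⟨hb1, hb2⟩, ⟨hb3, hb4⟩⟩, rfl⟩, intVec (k + m • kN + m' • kN'), ⟨_, rfl⟩, ?_⟩
      show (t - (m:ℝ) * N) • ξ + (s - (m':ℝ) * N') • ξ' + intVec (k + m • kN + m' • kN')
          = t • ξ + s • ξ' + intVec k
      rw [intVec_add, intVec_add, intVec_zsmul, intVec_zsmul, ← hkN, ← hkN']
      module
    · rintro ⟨a, ⟨⟨t, s⟩, _, rfl⟩, b, ⟨k, rfl⟩, rfl⟩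
      exact ⟨t, s, k, rfl⟩
  rw [key]
  exact IsClosed.vadd_left_of_isCompact isClosed_range_intVec
    (((isCompact_Icc).prod (isCompact_Icc)).image (by fun_prop))

lemma exists_translates {d : ℕ} (hd : 3 ≤ d) (Λ : Finset (Rd d)) :
    ∃ v : Rd d → Rd d, ∀ ξ ∈ Λ, ∀ ξ' ∈ Λ, ξ ≠ ξ' → v ξ - v ξ' ∉ pairSet ξ ξ' := by
  classical
  induction Λ using Finset.induction_on with
  | empty => exact ⟨0, by simp⟩
  | @insert a Λ' ha ih =>
    obtain ⟨v, hv⟩ := ih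
    have hbad : volume (⋃ ξ ∈ Λ', (v ξ +ᵥ pairSet a ξ)) = 0 := by
      refine (measure_biUnion_null_iff (Λ'.countable_toSet)).mpr fun ξ _ => ?_
      rw [measure_vadd]
      exact volume_pairSet hd a ξ
    obtain ⟨u, hu⟩ : ∃ u : Rd d, u ∉ ⋃ ξ ∈ Λ', (v ξ +ᵥ pairSet a ξ) := by
      by_contra h
      push_neg at h
      have hsub : (univ : Set (Rd d)) ⊆ ⋃ ξ ∈ Λ', (v ξ +ᵥ pairSet a ξ) := fun u _ => h u
      have := measure_mono_null hsub hbad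
      exact (isOpen_univ.measure_ne_zero volume univ_nonempty) this
    refine ⟨Function.update v a u, ?_⟩
    intro ξ hξ ξ' hξ' hne
    rcases Finset.mem_insert.mp hξ with rfl | hξΛ
    · rcases Finset.mem_insert.mp hξ' with rfl | hξ'Λ
      · exact absurd rfl hne
      · rw [Function.update_self, Function.update_of_ne (by rintro rfl; exact ha hξ'Λ)]
        intro hmem
        apply hu
        refine mem_biUnion hξ'Λ ?_
        rw [mem_vadd_set_iff_neg_vadd_mem]
        have : -v ξ' +ᵥ u = u - v ξ' := by rw [vadd_eq_add]; abel
        rw [this]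
        exact hmem
    · rcases Finset.mem_insert.mp hξ' with rfl | hξ'Λ
      · rw [Function.update_self, Function.update_of_ne (by rintro rfl; exact ha hξΛ)]
        intro hmem
        apply hu
        refine mem_biUnion hξΛ ?_
        rw [mem_vadd_set_iff_neg_vadd_mem]
        have : -v ξ +ᵥ u = -(v ξ - u) := by rw [vadd_eq_add]; abel
        rw [this]
        exact pairSet_neg (pairSet_symm ξ ξ' ▸ hmem)
      · rw [Function.update_of_ne (by rintro rfl; exact ha hξΛ),
          Function.update_of_ne (by rintro rfl; exact ha hξ'Λ)]
        exact hv ξ hξΛ ξ' hξ'Λ hne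

/-- In dimension `d ≥ 3`, for any finite set `Λ` of rational unit vectors and any
`ρ ∈ (0,1/4)` there are `μ₀ = μ₀(d,Λ) > 0` and translation vectors `v_ξ` such that the
periodized cylinders `v_ξ + B_{2ρ/μ} + ℝ ξ + ℤ^d`, `ξ ∈ Λ`, are pairwise disjoint for
all `μ ≥ μ₀`. -/
theorem disjoint_periodized_cylinders (d : ℕ) (hd : 3 ≤ d) (ρ : ℝ) (hρ0 : 0 < ρ)
    (hρ1 : ρ < 1/4) (Λ : Finset (Rd d)) (hΛ : ∀ ξ ∈ Λ, ‖ξ‖ = 1 ∧ RationalVector ξ) :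
    ∃ μ₀ : ℝ, 0 < μ₀ ∧ ∃ v : Rd d → Rd d,
      ∀ μ : ℝ, μ₀ ≤ μ →
        ∀ ξ ∈ Λ, ∀ ξ' ∈ Λ, ξ ≠ ξ' →
          Disjoint (perCyl (v ξ) ξ (2 * ρ / μ)) (perCyl (v ξ') ξ' (2 * ρ / μ)) := by
  classical
  obtain ⟨v, hv⟩ := exists_translates hd Λ
  set P := (Λ ×ˢ Λ).filter (fun p => p.1 ≠ p.2) with hP
  by_cases hPne : P.Nonempty
  · set δ := P.inf' hPne (fun p => Metric.infDist (v p.1 - v p.2) (pairSet p.1 p.2)) with hδ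
    have hδpos : 0 < δ := by
      rw [hδ, Finset.lt_inf'_iff]
      rintro ⟨ξ, ξ'⟩ hp
      rw [hP, Finset.mem_filter, Finset.mem_product] at hp
      obtain ⟨⟨h1, h2⟩, h3⟩ := hp
      exact (IsClosed.notMem_iff_infDist_pos
        (isClosed_pairSet (hΛ _ h1).2 (hΛ _ h2).2) (pairSet_nonempty _ _)).mp
        (hv _ h1 _ h2 h3)
    refine ⟨max 1 (4 * ρ / δ), lt_of_lt_of_le one_pos (le_max_left _ _), v, ?_⟩
    intro μ hμ ξ hξ ξ' hξ' hne
    have hμ1 : (1:ℝ) ≤ μ := le_trans (le_max_left _ _) hμ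
    have hμpos : 0 < μ := lt_of_lt_of_le one_pos hμ1
    have hμδ : 4 * ρ / δ ≤ μ := le_trans (le_max_right _ _) hμ
    have hratio : 4 * ρ / μ ≤ δ := by
      rw [div_le_iff₀ hμpos]
      calc 4 * ρ = δ * (4 * ρ / δ) := by field_simp
        _ ≤ δ * μ := by nlinarith
    rw [Set.disjoint_left]
    rintro x ⟨t, k, hk⟩ ⟨t', k', hk'⟩
    have hAB : dist (v ξ + t • ξ + intVec k) (v ξ' + t' • ξ' + intVec k') < 4 * ρ / μ := by
      calc dist (v ξ + t • ξ + intVec k) (v ξ' + t' • ξ' + intVec k')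
          ≤ dist (v ξ + t • ξ + intVec k) x + dist x (v ξ' + t' • ξ' + intVec k') :=
            dist_triangle _ _ _
        _ < 2 * ρ / μ + 2 * ρ / μ := by
            rw [dist_comm (v ξ + t • ξ + intVec k) x]; exact add_lt_add hk hk'
        _ = 4 * ρ / μ := by ring
    have hy : (-t) • ξ + t' • ξ' + intVec (k' - k) ∈ pairSet ξ ξ' := ⟨-t, t', k' - k, rfl⟩
    have hd2 : dist (v ξ - v ξ') ((-t) • ξ + t' • ξ' + intVec (k' - k)) =
        dist (v ξ + t • ξ + intVec k) (v ξ' + t' • ξ' + intVec k') := by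
      rw [dist_eq_norm, dist_eq_norm, intVec_sub]
      congr 1
      module
    have hmemP : (ξ, ξ') ∈ P := by
      rw [hP, Finset.mem_filter, Finset.mem_product]
      exact ⟨⟨hξ, hξ'⟩, hne⟩
    have hδle : δ ≤ dist (v ξ - v ξ') ((-t) • ξ + t' • ξ' + intVec (k' - k)) :=
      le_trans (Finset.inf'_le _ hmemP) (Metric.infDist_le_dist_of_mem hy)
    rw [hd2] at hδle
    linarith
  · refine ⟨1, one_pos, v, ?_⟩
    intro μ hμ ξ hξ ξ' hξ' hne
    exact absurd ⟨(ξ, ξ'),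
      by rw [hP, Finset.mem_filter, Finset.mem_product]; exact ⟨⟨hξ, hξ'⟩, hne⟩⟩ hPne
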